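/- Let N ≥ 1 and let g_1,…,g_N > 0 be fixed reals. For P > 0 define the water-filling capacity C(P) := sup over all p_1,…,p_N ≥ 0 with Σ_ℓ p_ℓ = P of Σ_{ℓ=1}^{N} log₂(1 + p_ℓ g_ℓ), and the equal-power rate E(P) := Σ_{ℓ=1}^{N} log₂(1 + (P/N)·g_ℓ). Then 0 ≤ C(P) − E(P) for all P > 0, and C(P) − E(P) → 0 as P → ∞. (This justifies that the gap Δ_gap from equal-power allocation becomes negligible as the SNR, i.e., the transmit power P_TX, grows.) -/

import Mathlib

open Filter Real

lemma amgm_log {n : ℕ} (hn : 1 ≤ n) (x : Fin n → ℝ) (hx : ∀ i, 0 < x i) :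
    ∑ i, Real.log (x i) ≤ n * Real.log ((∑ i, x i) / n) := by
  have hn0 : (0:ℝ) < n := by exact_mod_cast hn
  have hne : (Finset.univ : Finset (Fin n)).Nonempty := by
    simpa [Finset.univ_nonempty_iff, ← Fin.pos_iff_nonempty] using (show 0 < n by omega)
  have hT : 0 < ∑ i, x i := Finset.sum_pos (fun i _ => hx i) hne
  set T := ∑ i, x i with hTdef
  have hc : 0 < T / n := div_pos hT hn0
  have key : ∀ i, Real.log (x i) ≤ Real.log (T / n) + (x i / (T / n) - 1) := by
    intro i
    have h1 := Real.log_le_sub_one_of_pos (div_pos (hx i) hc)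
    rw [Real.log_div (hx i).ne' hc.ne'] at h1
    linarith
  have h2 : ∑ i, Real.log (x i) ≤ ∑ i, (Real.log (T/n) + (x i / (T/n) - 1)) :=
    Finset.sum_le_sum fun i _ => key i
  have h3 : ∑ i, (Real.log (T/n) + (x i / (T/n) - 1))
      = n * Real.log (T/n) + (T/(T/n) - n) := by
    rw [Finset.sum_add_distrib, Finset.sum_sub_distrib, ← Finset.sum_div]
    simp [Finset.card_univ, mul_comm]
    rfl
  have h4 : T/(T/n) = n := by field_simp
  rw [h3, h4] at h2
  linarith

theorem stmt_14 (N : ℕ) (hN : 1 ≤ N) (g : Fin N → ℝ) (hg : ∀ ℓ, 0 < g ℓ)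
    (C E : ℝ → ℝ)
    (hC : ∀ P : ℝ, C P = sSup {r : ℝ | ∃ p : Fin N → ℝ,
        (∀ ℓ, 0 ≤ p ℓ) ∧ (∑ ℓ, p ℓ) = P ∧ r = ∑ ℓ, Real.logb 2 (1 + p ℓ * g ℓ)})
    (hE : ∀ P : ℝ, E P = ∑ ℓ, Real.logb 2 (1 + (P / N) * g ℓ)) :
    (∀ P : ℝ, 0 < P → 0 ≤ C P - E P)
    ∧ Filter.Tendsto (fun P => C P - E P) Filter.atTop (nhds 0) := by
  have hln2 : (0:ℝ) < Real.log 2 := Real.log_pos one_lt_two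
  have hNr : (0:ℝ) < N := by exact_mod_cast hN
  have hne : (Finset.univ : Finset (Fin N)).Nonempty := by
    simpa [Finset.univ_nonempty_iff, ← Fin.pos_iff_nonempty] using (show 0 < N by omega)
  set S : ℝ := ∑ ℓ, (g ℓ)⁻¹ with hSdef
  have hS : 0 < S := Finset.sum_pos (fun ℓ _ => inv_pos.mpr (hg ℓ)) hne
  set U : ℝ → ℝ := fun P =>
    (∑ ℓ, Real.log (g ℓ) + N * Real.log ((S + P) / N)) / Real.log 2 with hU
  -- upper bound for every feasible point
  have hub : ∀ P : ℝ, 0 < P → ∀ r ∈ {r : ℝ | ∃ p : Fin N → ℝ,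
      (∀ ℓ, 0 ≤ p ℓ) ∧ (∑ ℓ, p ℓ) = P ∧ r = ∑ ℓ, Real.logb 2 (1 + p ℓ * g ℓ)},
      r ≤ U P := by
    rintro P hP r ⟨p, hp0, hpsum, rfl⟩
    have hx : ∀ ℓ, 0 < (g ℓ)⁻¹ + p ℓ := fun ℓ =>
      add_pos_of_pos_of_nonneg (inv_pos.mpr (hg ℓ)) (hp0 ℓ)
    have hsum : ∑ ℓ, ((g ℓ)⁻¹ + p ℓ) = S + P := by
      rw [Finset.sum_add_distrib, hpsum]
    have hlog : ∀ ℓ, Real.log (1 + p ℓ * g ℓ)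
        = Real.log (g ℓ) + Real.log ((g ℓ)⁻¹ + p ℓ) := by
      intro ℓ
      rw [← Real.log_mul (hg ℓ).ne' (hx ℓ).ne', mul_add,
        mul_inv_cancel₀ (hg ℓ).ne']
      ring_nf
    have h1 : ∑ ℓ, Real.logb 2 (1 + p ℓ * g ℓ)
        = (∑ ℓ, Real.log (1 + p ℓ * g ℓ)) / Real.log 2 := by
      simp [Real.logb, Finset.sum_div]
    have hamgm := amgm_log hN (fun ℓ => (g ℓ)⁻¹ + p ℓ) hx
    rw [hsum] at hamgm
    have h2 : ∑ ℓ, Real.log (1 + p ℓ * g ℓ)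
        = ∑ ℓ, Real.log (g ℓ) + ∑ ℓ, Real.log ((g ℓ)⁻¹ + p ℓ) := by
      simp [hlog, Finset.sum_add_distrib]
    rw [h1, hU]
    show (∑ ℓ, Real.log (1 + p ℓ * g ℓ)) / Real.log 2
      ≤ (∑ ℓ, Real.log (g ℓ) + N * Real.log ((S + P) / N)) / Real.log 2
    gcongr
    linarith
  -- membership of the equal-power point
  have hmem : ∀ P : ℝ, 0 < P → E P ∈ {r : ℝ | ∃ p : Fin N → ℝ,
      (∀ ℓ, 0 ≤ p ℓ) ∧ (∑ ℓ, p ℓ) = P ∧ r = ∑ ℓ, Real.logb 2 (1 + p ℓ * g ℓ)} := by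
    intro P hP
    refine ⟨fun _ => P / N, fun _ => (div_pos hP hNr).le, ?_, hE P⟩
    rw [Finset.sum_const, Finset.card_univ, Fintype.card_fin, nsmul_eq_mul]
    field_simp
  have hCE : ∀ P : ℝ, 0 < P → E P ≤ C P := by
    intro P hP
    rw [hC P]
    exact le_csSup ⟨U P, fun r hr => hub P hP r hr⟩ (hmem P hP)
  have hCU : ∀ P : ℝ, 0 < P → C P ≤ U P := by
    intro P hP
    rw [hC P]
    exact csSup_le ⟨E P, hmem P hP⟩ (hub P hP)
  have part1 : ∀ P : ℝ, 0 < P → 0 ≤ C P - E P := by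
    intro P hP; have := hCE P hP; linarith
  refine ⟨part1, ?_⟩
  -- the gap function
  set t : Fin N → ℝ → ℝ := fun ℓ P =>
    Real.log (g ℓ) + Real.log (S + P) - Real.log ((N : ℝ) + P * g ℓ) with ht
  set D : ℝ → ℝ := fun P => (∑ ℓ, t ℓ P) / Real.log 2 with hD
  have htend : ∀ ℓ, Tendsto (fun P => t ℓ P) atTop (nhds 0) := by
    intro ℓ
    have ha := hg ℓ
    set a := g ℓ
    have hnum : Tendsto (fun P : ℝ => a * S / P + a) atTop (nhds a) := by
      have h0 : Tendsto (fun P : ℝ => a * S / P) atTop (nhds 0) :=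
        tendsto_const_nhds.div_atTop tendsto_id
      simpa using h0.add tendsto_const_nhds
    have hden : Tendsto (fun P : ℝ => (N : ℝ) / P + a) atTop (nhds a) := by
      have h0 : Tendsto (fun P : ℝ => (N : ℝ) / P) atTop (nhds 0) :=
        tendsto_const_nhds.div_atTop tendsto_id
      simpa using h0.add tendsto_const_nhds
    have hr : Tendsto (fun P : ℝ => (a * S / P + a) / ((N : ℝ) / P + a))
        atTop (nhds 1) := by
      have := hnum.div hden ha.ne'
      rw [div_self ha.ne'] at this; exact this
    have hr' : Tendsto (fun P : ℝ => a * (S + P) / ((N : ℝ) + P * a))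
        atTop (nhds 1) := by
      apply hr.congr'
      filter_upwards [eventually_gt_atTop 0] with P hP
      have hP' : P ≠ 0 := hP.ne'
      field_simp
    have hlog1 : Tendsto (fun P : ℝ => Real.log (a * (S + P) / ((N : ℝ) + P * a)))
        atTop (nhds 0) := by
      have := (Real.continuousAt_log one_ne_zero).tendsto.comp hr'
      rw [Real.log_one] at this; exact this
    apply hlog1.congr'
    filter_upwards [eventually_gt_atTop 0] with P hP
    have h1 : 0 < S + P := by linarith
    have h2 : 0 < (N : ℝ) + P * a := by positivity
    rw [Real.log_div (by positivity) h2.ne', Real.log_mul ha.ne' h1.ne']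
  have hDt : Tendsto D atTop (nhds 0) := by
    have hsum : Tendsto (fun P => ∑ ℓ, t ℓ P) atTop (nhds 0) := by
      have h := tendsto_finset_sum (Finset.univ : Finset (Fin N))
        (fun ℓ _ => htend ℓ)
      simp only [Finset.sum_const_zero] at h
      exact h
    rw [hD]
    have h2 := hsum.div_const (Real.log 2)
    rw [zero_div] at h2
    exact h2
  -- U P - E P = D P for P > 0
  have hUE : ∀ P : ℝ, 0 < P → U P - E P = D P := by
    intro P hP
    have hmid : Real.log ((S + P) / N) = Real.log (S + P) - Real.log N :=
      Real.log_div (by positivity) hNr.ne'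
    have hterm : ∀ ℓ, Real.log (1 + (P / N) * g ℓ)
        = Real.log ((N : ℝ) + P * g ℓ) - Real.log N := by
      intro ℓ
      have hgl := hg ℓ
      have he : (1 : ℝ) + (P / N) * g ℓ = ((N : ℝ) + P * g ℓ) / N := by
        field_simp
      rw [he, Real.log_div (by positivity) hNr.ne']
    have e1 : ∑ ℓ, Real.log (1 + (P / N) * g ℓ)
        = (∑ ℓ, Real.log ((N : ℝ) + P * g ℓ)) - N * Real.log N := by
      simp only [hterm]
      rw [Finset.sum_sub_distrib, Finset.sum_const, Finset.card_univ,
        Fintype.card_fin, nsmul_eq_mul]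
    have e2 : ∑ ℓ, t ℓ P = ∑ ℓ, Real.log (g ℓ) + N * Real.log (S + P)
        - ∑ ℓ, Real.log ((N : ℝ) + P * g ℓ) := by
      simp only [ht, Finset.sum_sub_distrib, Finset.sum_add_distrib,
        Finset.sum_const, Finset.card_univ, Fintype.card_fin, nsmul_eq_mul]
    have hEform : E P = (∑ ℓ, Real.log (1 + (P / N) * g ℓ)) / Real.log 2 := by
      rw [hE]; simp [Real.logb, Finset.sum_div]
    rw [hEform]
    simp only [hU, hD]
    rw [e1, e2, hmid]
    ring
  apply tendsto_of_tendsto_of_tendsto_of_le_of_le'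
    (tendsto_const_nhds : Tendsto (fun _ : ℝ => (0:ℝ)) atTop (nhds 0)) hDt
  · filter_upwards [eventually_gt_atTop 0] with P hP
    exact part1 P hP
  · filter_upwards [eventually_gt_atTop 0] with P hP
    have := hCU P hP
    have := hUE P hP
    linarith
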